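/- arXiv:2510.05303 — 8 statements merged into one kernel-verified Lean document; each statement's English description precedes it below -/
import Mathlib

section
/- For a nonzero n×n complex matrix A, the following are equivalent: (i) ‖AB‖ = ‖A‖·‖B‖ for every n×n complex matrix B (spectral norm); (ii) A is a nonzero scalar multiple of a unitary matrix. -/
open scoped Matrix Matrix.Norms.L2Operator

noncomputable section

open scoped ComplexInnerProductSpace

def colMat {n : ℕ} (i0 : Fin n) (v : Fin n → ℂ) : Matrix (Fin n) (Fin n) ℂ :=
  Matrix.of fun i j => if j = i0 then v i else 0

lemma mul_colMat {n : ℕ} (i0 : Fin n) (A : Matrix (Fin n) (Fin n) ℂ) (v : Fin n → ℂ) :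
    A * colMat i0 v = colMat i0 (A.mulVec v) := by
  ext i j
  simp only [colMat, Matrix.mul_apply, Matrix.of_apply, Matrix.mulVec, dotProduct]
  split <;> simp

lemma conjT_colMat_mul {n : ℕ} (i0 : Fin n) (v : Fin n → ℂ) :
    (colMat i0 v)ᴴ * colMat i0 v
      = ((∑ i, ‖v i‖ ^ 2 : ℝ) : ℂ) • Matrix.single i0 i0 1 := by
  ext j k
  simp only [colMat, Matrix.mul_apply, Matrix.conjTranspose_apply, Matrix.of_apply,
    Matrix.smul_apply, Matrix.single, smul_eq_mul]
  by_cases hj : j = i0 <;> by_cases hk : k = i0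
  · simp [hj, hk, Complex.ofReal_sum, Complex.mul_conj', Complex.conj_mul', Complex.normSq_eq_norm_sq,
      ← Complex.sq_norm, mul_comm]
  · simp [hj, hk, Ne.symm hk]
  · simp [hj, hk, Ne.symm hj]
  · simp [hj, hk, Ne.symm hj, Ne.symm hk]

lemma norm_stdBasis {n : ℕ} (i0 : Fin n) :
    ‖(Matrix.single i0 i0 1 : Matrix (Fin n) (Fin n) ℂ)‖ = 1 := by
  set E : Matrix (Fin n) (Fin n) ℂ := Matrix.single i0 i0 1 with hEdef
  have hconj : Eᴴ = E := by
    ext i j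
    by_cases h1 : i0 = i <;> by_cases h2 : i0 = j <;>
      simp [Matrix.conjTranspose_apply, hEdef, Matrix.single, h1, h2, and_comm]
  have hmul : E * E = E := by
    rw [hEdef]
    have := Matrix.single_mul_single_same (i := i0) (j := i0) (c := (1 : ℂ)) i0 1
    simpa using this
  have h := Matrix.l2_opNorm_conjTranspose_mul_self E
  rw [hconj, hmul] at h
  have hne : E ≠ 0 := by
    intro h0
    have h1 : E i0 i0 = 1 := Matrix.single_apply_same i0 i0 (1 : ℂ)
    rw [h0] at h1
    simp at h1
  have hnorm : ‖E‖ ≠ 0 := norm_ne_zero_iff.mpr hne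
  have h2 : ‖E‖ * 1 = ‖E‖ * ‖E‖ := by rw [mul_one]; exact h
  exact (mul_left_cancel₀ hnorm h2).symm

lemma norm_colMat {n : ℕ} (i0 : Fin n) (v : Fin n → ℂ) :
    ‖colMat i0 v‖ = Real.sqrt (∑ i, ‖v i‖ ^ 2) := by
  have h := Matrix.l2_opNorm_conjTranspose_mul_self (colMat i0 v)
  rw [conjT_colMat_mul] at h
  rw [norm_smul, norm_stdBasis, mul_one] at h
  rw [Complex.norm_real, Real.norm_eq_abs, abs_of_nonneg (by positivity)] at h
  rw [h, Real.sqrt_mul_self (norm_nonneg _)]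


/-- For a nonzero n×n complex matrix A: ‖AB‖ = ‖A‖‖B‖ for all B iff A is a nonzero
scalar multiple of a unitary matrix. -/
theorem stmt0 {n : ℕ} (A : Matrix (Fin n) (Fin n) ℂ) (hA : A ≠ 0) :
    (∀ B : Matrix (Fin n) (Fin n) ℂ, ‖A * B‖ = ‖A‖ * ‖B‖) ↔
      (∃ (c : ℂ) (U : Matrix (Fin n) (Fin n) ℂ), c ≠ 0 ∧ Uᴴ * U = 1 ∧ A = c • U) := by
  have hn : 0 < n := by
    rcases Nat.eq_zero_or_pos n with h | h
    · exfalso; apply hA; subst h; ext i; exact absurd i.2 (by omega)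
    · exact h
  constructor
  · intro hB
    set i0 : Fin n := ⟨0, hn⟩
    have h1 : ∀ v : Fin n → ℂ,
        Real.sqrt (∑ i, ‖A.mulVec v i‖ ^ 2) = ‖A‖ * Real.sqrt (∑ i, ‖v i‖ ^ 2) := by
      intro v
      have := hB (colMat i0 v)
      rwa [mul_colMat, norm_colMat, norm_colMat] at this
    set f : EuclideanSpace ℂ (Fin n) →L[ℂ] EuclideanSpace ℂ (Fin n) :=
      Matrix.toEuclideanCLM (𝕜 := ℂ) A with hf
    have hfx : ∀ x : EuclideanSpace ℂ (Fin n), ‖f x‖ = ‖A‖ * ‖x‖ := by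
      intro x
      have happ : ∀ i, f x i = A.mulVec x i := fun i => rfl
      rw [EuclideanSpace.norm_eq, EuclideanSpace.norm_eq]
      simp_rw [happ]
      exact h1 x
    have key : Aᴴ * A = ((‖A‖ : ℂ) ^ 2) • 1 := by
      set g : EuclideanSpace ℂ (Fin n) →L[ℂ] EuclideanSpace ℂ (Fin n) :=
        (ContinuousLinearMap.adjoint f).comp f with hg
      set p : EuclideanSpace ℂ (Fin n) →L[ℂ] EuclideanSpace ℂ (Fin n) :=
        ((‖A‖ : ℂ) ^ 2) • 1 with hp
      have h2 : ∀ x : EuclideanSpace ℂ (Fin n),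
          ⟪(g : EuclideanSpace ℂ (Fin n) →ₗ[ℂ] EuclideanSpace ℂ (Fin n)) x, x⟫ = ⟪(p : EuclideanSpace ℂ (Fin n) →ₗ[ℂ] EuclideanSpace ℂ (Fin n)) x, x⟫ := by
        intro x
        simp only [hg, hp, ContinuousLinearMap.coe_coe, ContinuousLinearMap.coe_comp',
          Function.comp_apply, ContinuousLinearMap.coe_smul', Pi.smul_apply,
          ContinuousLinearMap.one_apply, inner_smul_left]
        rw [ContinuousLinearMap.adjoint_inner_left, inner_self_eq_norm_sq_to_K,
          inner_self_eq_norm_sq_to_K, hfx x]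
        rw [map_pow, Complex.conj_ofReal]
        push_cast
        rw [mul_pow]
        rfl
      have h3 : (g : EuclideanSpace ℂ (Fin n) →ₗ[ℂ] EuclideanSpace ℂ (Fin n)) = (p : EuclideanSpace ℂ (Fin n) →ₗ[ℂ] EuclideanSpace ℂ (Fin n)) := (ext_inner_map _ _).mp h2
      have h4 : g = p := ContinuousLinearMap.coe_injective h3
      have h5 : Matrix.toEuclideanCLM (𝕜 := ℂ) (Aᴴ * A)
          = Matrix.toEuclideanCLM (𝕜 := ℂ) (((‖A‖ : ℂ) ^ 2) • 1) := by
        rw [map_mul, map_smul, map_one, ← Matrix.star_eq_conjTranspose, map_star,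
          ContinuousLinearMap.star_eq_adjoint]
        exact h4
      exact Matrix.toEuclideanCLM.injective h5
    have hAnorm : ‖A‖ ≠ 0 := norm_ne_zero_iff.mpr hA
    have hAc : ((‖A‖ : ℂ)) ≠ 0 := by exact_mod_cast hAnorm
    refine ⟨(‖A‖ : ℂ), (‖A‖ : ℂ)⁻¹ • A, hAc, ?_, ?_⟩
    · rw [Matrix.conjTranspose_smul, Matrix.smul_mul, Matrix.mul_smul, key, smul_smul, smul_smul]
      rw [star_inv₀, Complex.star_def, Complex.conj_ofReal]
      have : (((‖A‖ : ℂ))⁻¹ * ((‖A‖ : ℂ))⁻¹ * ((‖A‖ : ℂ) ^ 2)) = 1 := by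
        field_simp
      rw [this, one_smul]
    · rw [smul_smul, mul_inv_cancel₀ hAc, one_smul]
  · rintro ⟨c, U, hc, hU, rfl⟩
    have hone : (1 : Matrix (Fin n) (Fin n) ℂ) ≠ 0 := by
      intro h0
      apply hA
      calc c • U = (c • U) * 1 := by rw [mul_one]
        _ = 0 := by rw [h0, mul_zero]
    have honen : ‖(1 : Matrix (Fin n) (Fin n) ℂ)‖ ≠ 0 := norm_ne_zero_iff.mpr hone
    have hone1 : ‖(1 : Matrix (Fin n) (Fin n) ℂ)‖ = 1 := by
      have h := Matrix.l2_opNorm_conjTranspose_mul_self (1 : Matrix (Fin n) (Fin n) ℂ)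
      simp only [Matrix.conjTranspose_one, mul_one] at h
      have h2 : ‖(1 : Matrix (Fin n) (Fin n) ℂ)‖ * 1
          = ‖(1 : Matrix (Fin n) (Fin n) ℂ)‖ * ‖(1 : Matrix (Fin n) (Fin n) ℂ)‖ := by
        rw [mul_one]; exact h
      exact (mul_left_cancel₀ honen h2).symm
    have hUnorm : ‖U‖ = 1 := by
      have h := Matrix.l2_opNorm_conjTranspose_mul_self U
      rw [hU, hone1] at h
      nlinarith [norm_nonneg U]
    intro B
    have hUB : ‖U * B‖ = ‖B‖ := by
      have h1 := Matrix.l2_opNorm_conjTranspose_mul_self (U * B)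
      have h2 := Matrix.l2_opNorm_conjTranspose_mul_self B
      rw [Matrix.conjTranspose_mul] at h1
      have h3 : Bᴴ * Uᴴ * (U * B) = Bᴴ * B := by
        rw [mul_assoc, ← mul_assoc Uᴴ U B, hU, one_mul]
      rw [h3, h2] at h1
      nlinarith [norm_nonneg (U * B), norm_nonneg B]
    rw [Matrix.smul_mul, norm_smul, norm_smul, hUB, hUnorm, mul_one]
end
end

section
/- For a nonzero n×n real matrix A, ‖AB‖ = ‖A‖·‖B‖ holds for every n×n real matrix B (spectral norm) if and only if A is a nonzero scalar multiple of an orthogonal matrix. -/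
open scoped Matrix Matrix.Norms.L2Operator

noncomputable section

open Matrix

namespace Stmt1Aux

variable {n : ℕ}

lemma toEuclideanCLM_vecMulVec (u v : Fin n → ℝ) :
    Matrix.toEuclideanCLM (𝕜 := ℝ) (vecMulVec u v) =
      (innerSL ℝ ((WithLp.equiv 2 (Fin n → ℝ)).symm v)).smulRight
        ((WithLp.equiv 2 (Fin n → ℝ)).symm u) := by
  refine ContinuousLinearMap.ext fun x => ?_
  apply (WithLp.equiv 2 (Fin n → ℝ)).injective
  change vecMulVec u v *ᵥ WithLp.ofLp x = WithLp.ofLp (((innerSL ℝ ((WithLp.equiv 2 (Fin n → ℝ)).symm v)).smulRight ((WithLp.equiv 2 (Fin n → ℝ)).symm u)) x)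
  funext i
  simp only [Matrix.mulVec, dotProduct, vecMulVec_apply,
    ContinuousLinearMap.smulRight_apply, innerSL_apply_apply]
  rw [WithLp.ofLp_smul, EuclideanSpace.inner_eq_star_dotProduct]
  simp only [WithLp.equiv_symm_apply, star_trivial, Pi.smul_apply, smul_eq_mul,
    dotProduct, Finset.sum_mul]
  exact Finset.sum_congr rfl fun k _ => by ring

lemma norm_vecMulVec (u v : Fin n → ℝ) :
    ‖vecMulVec u v‖ = ‖(WithLp.equiv 2 (Fin n → ℝ)).symm u‖ *
      ‖(WithLp.equiv 2 (Fin n → ℝ)).symm v‖ := by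
  rw [Matrix.cstar_norm_def, toEuclideanCLM_vecMulVec,
    ContinuousLinearMap.norm_smulRight_apply, innerSL_apply_norm, mul_comm]

lemma norm_sq_eq (x : Fin n → ℝ) :
    ‖(WithLp.equiv 2 (Fin n → ℝ)).symm x‖ ^ 2 = x ⬝ᵥ x := by
  rw [← real_inner_self_eq_norm_sq, WithLp.equiv_symm_apply, EuclideanSpace.inner_toLp_toLp]
  simp

end Stmt1Aux

open Stmt1Aux

/-- For a nonzero n×n real matrix A: ‖AB‖ = ‖A‖‖B‖ for all B iff A is a nonzero
scalar multiple of an orthogonal matrix. -/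
theorem stmt1 {n : ℕ} (A : Matrix (Fin n) (Fin n) ℝ) (hA : A ≠ 0) :
    (∀ B : Matrix (Fin n) (Fin n) ℝ, ‖A * B‖ = ‖A‖ * ‖B‖) ↔
      (∃ (c : ℝ) (U : Matrix (Fin n) (Fin n) ℝ), c ≠ 0 ∧ Uᵀ * U = 1 ∧ A = c • U) := by
  constructor
  · intro h
    set c := ‖A‖ with hc
    have hc0 : 0 < c := norm_pos_iff.mpr hA
    have key : ∀ x : Fin n → ℝ, (A *ᵥ x) ⬝ᵥ (A *ᵥ x) = c ^ 2 * (x ⬝ᵥ x) := by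
      intro x
      by_cases hx : x = 0
      · subst hx; simp
      · have h1 := h (vecMulVec x x)
        have h2 : A * vecMulVec x x = vecMulVec (A *ᵥ x) x := by
          ext i j
          simp [Matrix.mul_apply, vecMulVec_apply, Matrix.mulVec, dotProduct,
            Finset.sum_mul, mul_assoc]
        rw [h2, norm_vecMulVec, norm_vecMulVec] at h1
        have hx' : ‖(WithLp.equiv 2 (Fin n → ℝ)).symm x‖ ≠ 0 := by
          simp only [ne_eq, norm_eq_zero]
          exact fun hh => hx ((WithLp.equiv 2 (Fin n → ℝ)).symm.injective (by simpa using hh))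
        have h3 : ‖(WithLp.equiv 2 (Fin n → ℝ)).symm (A *ᵥ x)‖ =
            c * ‖(WithLp.equiv 2 (Fin n → ℝ)).symm x‖ := by
          apply mul_right_cancel₀ hx'
          rw [h1]; ring
        have h4 := congrArg (· ^ 2) h3
        simp only [mul_pow] at h4
        rw [norm_sq_eq, norm_sq_eq] at h4
        exact h4
    have hQ : ∀ x : Fin n → ℝ, x ⬝ᵥ ((Aᵀ * A) *ᵥ x) = c ^ 2 * (x ⬝ᵥ x) := by
      intro x
      rw [← key x, Matrix.dotProduct_mulVec, ← Matrix.vecMul_vecMul,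
        Matrix.vecMul_transpose, ← Matrix.dotProduct_mulVec]
    have hsym : (Aᵀ * A)ᵀ = Aᵀ * A := by
      rw [Matrix.transpose_mul, Matrix.transpose_transpose]
    have hMI : Aᵀ * A = (c ^ 2) • (1 : Matrix (Fin n) (Fin n) ℝ) := by
      ext i j
      by_cases hij : i = j
      · subst hij
        have := hQ (Pi.single i 1)
        simpa [single_dotProduct, dotProduct_single,
          Matrix.mulVec_single] using this
      · have h1 := hQ (Pi.single i 1 + Pi.single j 1)
        have hii := hQ (Pi.single i 1)
        have hjj := hQ (Pi.single j 1)
        have hji : (Aᵀ * A) j i = (Aᵀ * A) i j := by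
          have := congrFun (congrFun hsym i) j
          rwa [Matrix.transpose_apply] at this
        simp only [Matrix.mulVec_add, add_dotProduct, dotProduct_add,
          single_dotProduct, dotProduct_single, Matrix.mulVec_single,
          Pi.single_apply, mul_one, one_mul, Pi.smul_apply, MulOpposite.op_one, one_smul,
          Matrix.col_apply] at h1 hii hjj
        simp only [hij, Ne.symm hij, if_false, if_true, if_neg] at h1 hii hjj
        simp only [Matrix.smul_apply, Matrix.one_apply, hij, if_false, smul_zero]
        rw [hji] at h1
        simp only [Pi.add_apply, Pi.single_eq_same, Pi.single_eq_of_ne hij,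
          Pi.single_eq_of_ne (Ne.symm hij)] at h1
        simp at h1 hii hjj
        linarith
    refine ⟨c, c⁻¹ • A, ne_of_gt hc0, ?_, ?_⟩
    · rw [Matrix.transpose_smul, smul_mul_assoc, mul_smul_comm, hMI, smul_smul, smul_smul]
      rw [show c⁻¹ * c⁻¹ * c ^ 2 = 1 by field_simp, one_smul]
    · rw [smul_smul, mul_inv_cancel₀ (ne_of_gt hc0), one_smul]
  · rintro ⟨c, U, hc, hU, rfl⟩ B
    have hne : Nonempty (Fin n) := by
      by_contra hemp
      exact hA (by ext i j; exact absurd ⟨i⟩ hemp)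
    obtain ⟨i0⟩ := hne
    have hone : (1 : Matrix (Fin n) (Fin n) ℝ) ≠ 0 := by
      intro hh
      have := congrFun (congrFun hh i0) i0
      simp at this
    have hnorm1 : ‖(1 : Matrix (Fin n) (Fin n) ℝ)‖ = 1 := by
      have h1 := Matrix.l2_opNorm_conjTranspose_mul_self (1 : Matrix (Fin n) (Fin n) ℝ)
      rw [Matrix.conjTranspose_one, one_mul] at h1
      have h2 : (0:ℝ) < ‖(1 : Matrix (Fin n) (Fin n) ℝ)‖ :=
        lt_of_le_of_ne (norm_nonneg _) (Ne.symm (norm_ne_zero_iff.mpr hone))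
      nlinarith [h1, h2]
    have hUt : Uᴴ = Uᵀ := Matrix.conjTranspose_eq_transpose_of_trivial U
    have hUn : ‖U‖ = 1 := by
      have h1 := Matrix.l2_opNorm_conjTranspose_mul_self U
      rw [hUt, hU, hnorm1] at h1
      nlinarith [norm_nonneg U]
    have hUtn : ‖Uᵀ‖ = 1 := by
      rw [← hUt, Matrix.l2_opNorm_conjTranspose, hUn]
    have hUB : ∀ C : Matrix (Fin n) (Fin n) ℝ, ‖U * C‖ = ‖C‖ := by
      intro C
      refine le_antisymm ?_ ?_
      · calc ‖U * C‖ ≤ ‖U‖ * ‖C‖ := Matrix.l2_opNorm_mul U C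
          _ = ‖C‖ := by rw [hUn, one_mul]
      · calc ‖C‖ = ‖Uᵀ * (U * C)‖ := by rw [← mul_assoc, hU, one_mul]
          _ ≤ ‖Uᵀ‖ * ‖U * C‖ := Matrix.l2_opNorm_mul _ _
          _ = ‖U * C‖ := by rw [hUtn, one_mul]
    rw [smul_mul_assoc, norm_smul, norm_smul, hUB, hUn]
    ring
end
end

section
/- Let A, B be nonzero n×n complex matrices. Then ‖AB*‖ = ‖A‖·‖B‖ (spectral norm) if and only if there exists a unit vector y such that ‖Ay‖ = ‖A‖ and ‖By‖ = ‖B‖. -/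
open scoped Matrix Matrix.Norms.L2Operator
open ContinuousLinearMap InnerProductSpace

set_option maxHeartbeats 1000000
set_option synthInstance.maxHeartbeats 400000

noncomputable section

variable {E : Type*} [NormedAddCommGroup E] [InnerProductSpace ℂ E] [CompleteSpace E]

/-- Equality in Cauchy–Schwarz: if a unit vector attains the norm of `T`,
then it is an eigenvector of `T† T`. -/
lemma key_eig (T : E →L[ℂ] E) {x : E} (hx : ‖x‖ = 1) (hTx : ‖T x‖ = ‖T‖) :
    ContinuousLinearMap.adjoint T (T x) = ((‖T‖ : ℂ) ^ 2) • x := by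
  set u := ContinuousLinearMap.adjoint T (T x) with hu
  have hinner : ⟪u, x⟫_ℂ = (‖T‖ : ℂ) ^ 2 := by
    rw [hu, adjoint_inner_left, inner_self_eq_norm_sq_to_K, hTx]
    norm_cast
  have hle : ‖u‖ ≤ ‖T‖ ^ 2 := by
    calc ‖u‖ ≤ ‖ContinuousLinearMap.adjoint T‖ * ‖T x‖ := le_opNorm _ _
    _ = ‖T‖ ^ 2 := by
      rw [LinearIsometryEquiv.norm_map, hTx]; ring
  have hge : ‖T‖ ^ 2 ≤ ‖u‖ := by
    have h1 : ‖⟪u, x⟫_ℂ‖ ≤ ‖u‖ * ‖x‖ := norm_inner_le_norm _ _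
    rw [hinner, hx, mul_one] at h1
    simpa using h1
  have hnu : ‖u‖ = ‖T‖ ^ 2 := le_antisymm hle hge
  have heq : ⟪u, x⟫_ℂ = (‖u‖ : ℂ) * ‖x‖ := by
    rw [hinner, hnu, hx]; push_cast; ring
  have h5 := inner_eq_norm_mul_iff.mp heq
  rw [hx, hnu] at h5
  simpa using h5

lemma exists_attain {n : ℕ} (hn : 0 < n)
    (f : EuclideanSpace ℂ (Fin n) →L[ℂ] EuclideanSpace ℂ (Fin n)) :
    ∃ x : EuclideanSpace ℂ (Fin n), ‖x‖ = 1 ∧ ‖f x‖ = ‖f‖ := by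
  haveI : Nonempty (Fin n) := ⟨⟨0, hn⟩⟩
  haveI : Nontrivial (EuclideanSpace ℂ (Fin n)) :=
    inferInstanceAs (Nontrivial (PiLp 2 fun _ : Fin n => ℂ))
  have hsne : (Metric.sphere (0 : EuclideanSpace ℂ (Fin n)) 1).Nonempty :=
    NormedSpace.sphere_nonempty.mpr zero_le_one
  obtain ⟨x, hxs, hxmax⟩ := (isCompact_sphere (0 : EuclideanSpace ℂ (Fin n)) 1).exists_isMaxOn
    hsne (continuous_norm.comp f.continuous).continuousOn
  have hx1 : ‖x‖ = 1 := by simpa using hxs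
  refine ⟨x, hx1, le_antisymm (by simpa [hx1] using f.le_opNorm x) ?_⟩
  refine f.opNorm_le_bound (by positivity) fun v => ?_
  rcases eq_or_ne v 0 with rfl | hv
  · simp
  · have hnv : (0:ℝ) < ‖v‖ := norm_pos_iff.mpr hv
    have hmem : (‖v‖⁻¹ : ℂ) • v ∈ Metric.sphere (0 : EuclideanSpace ℂ (Fin n)) 1 := by
      simp [norm_smul, hnv.ne', inv_mul_cancel₀ hnv.ne']
    have h6 : ‖f ((‖v‖⁻¹ : ℂ) • v)‖ ≤ ‖f x‖ := hxmax hmem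
    rw [map_smul, norm_smul] at h6
    simp only [norm_inv, Complex.norm_real, norm_norm] at h6
    calc ‖f v‖ = ‖v‖ * (‖v‖⁻¹ * ‖f v‖) := by field_simp
    _ ≤ ‖v‖ * ‖f x‖ := mul_le_mul_of_nonneg_left h6 hnv.le
    _ = ‖f x‖ * ‖v‖ := mul_comm _ _

theorem abstract {n : ℕ} (hn : 0 < n)
    (T S : EuclideanSpace ℂ (Fin n) →L[ℂ] EuclideanSpace ℂ (Fin n))
    (hT : T ≠ 0) (hS : S ≠ 0) :
    ‖T ∘L ContinuousLinearMap.adjoint S‖ = ‖T‖ * ‖S‖ ↔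
      ∃ y : EuclideanSpace ℂ (Fin n), ‖y‖ = 1 ∧ ‖T y‖ = ‖T‖ ∧ ‖S y‖ = ‖S‖ := by
  have hTpos : (0:ℝ) < ‖T‖ := norm_pos_iff.mpr hT
  have hSpos : (0:ℝ) < ‖S‖ := norm_pos_iff.mpr hS
  constructor
  · intro h
    obtain ⟨x, hx1, hxat⟩ := exists_attain hn (T ∘L ContinuousLinearMap.adjoint S)
    rw [h] at hxat
    set w := ContinuousLinearMap.adjoint S x with hw
    have hTw : ‖T w‖ = ‖T‖ * ‖S‖ := hxat
    have hwle : ‖w‖ ≤ ‖S‖ := by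
      have := (ContinuousLinearMap.adjoint S).le_opNorm x
      rwa [LinearIsometryEquiv.norm_map, hx1, mul_one] at this
    have hwge : ‖S‖ ≤ ‖w‖ := by
      have h2 : ‖T w‖ ≤ ‖T‖ * ‖w‖ := T.le_opNorm w
      rw [hTw] at h2
      exact le_of_mul_le_mul_left h2 hTpos
    have hwn : ‖w‖ = ‖S‖ := le_antisymm hwle hwge
    -- apply key_eig to adjoint S
    have hkey := key_eig (ContinuousLinearMap.adjoint S) hx1
      (by rw [← hw, hwn, LinearIsometryEquiv.norm_map])
    rw [adjoint_adjoint, LinearIsometryEquiv.norm_map] at hkey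
    -- hkey : S w = (‖S‖^2 : ℂ) • x
    refine ⟨(‖S‖⁻¹ : ℂ) • w, ?_, ?_, ?_⟩
    · rw [norm_smul, hwn]
      simp [hSpos.ne']
    · rw [map_smul, norm_smul, hTw]
      simp only [norm_inv, Complex.norm_real, norm_norm]
      field_simp
    · rw [map_smul, hw, hkey, norm_smul, norm_smul, hx1]
      simp only [norm_inv, Complex.norm_real, norm_norm, norm_pow, mul_one]
      rw [sq]
      field_simp
  · rintro ⟨y, hy1, hTy, hSy⟩
    have hkey := key_eig S hy1 hSy
    have hle : ‖T ∘L ContinuousLinearMap.adjoint S‖ ≤ ‖T‖ * ‖S‖ := by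
      calc ‖T ∘L ContinuousLinearMap.adjoint S‖ ≤ ‖T‖ * ‖ContinuousLinearMap.adjoint S‖ :=
        opNorm_comp_le _ _
      _ = ‖T‖ * ‖S‖ := by rw [LinearIsometryEquiv.norm_map]
    have hge : ‖T‖ * ‖S‖ ≤ ‖T ∘L ContinuousLinearMap.adjoint S‖ := by
      set z := (‖S‖⁻¹ : ℂ) • (S y) with hz
      have hz1 : ‖z‖ = 1 := by
        rw [hz, norm_smul, hSy]
        simp [hSpos.ne']
      have happ : (T ∘L ContinuousLinearMap.adjoint S) z = ((‖S‖ : ℂ)) • T y := by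
        rw [hz, comp_apply, map_smul, hkey, map_smul, map_smul]
        rw [smul_smul]
        congr 1
        have hne : (‖S‖ : ℂ) ≠ 0 := by exact_mod_cast hSpos.ne'
        field_simp [hne]
      have := (T ∘L ContinuousLinearMap.adjoint S).le_opNorm z
      rw [happ, hz1, mul_one, norm_smul, hTy] at this
      simpa [mul_comm] using this
    exact le_antisymm hle hge

/-- ‖ABᴴ‖ = ‖A‖‖B‖ iff A and B have a common norm-attaining unit vector. -/
theorem stmt3 {n : ℕ} (A B : Matrix (Fin n) (Fin n) ℂ) (hA : A ≠ 0) (hB : B ≠ 0) :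
    ‖A * Bᴴ‖ = ‖A‖ * ‖B‖ ↔
      ∃ y : EuclideanSpace ℂ (Fin n), ‖y‖ = 1 ∧
        ‖Matrix.toEuclideanCLM (𝕜 := ℂ) A y‖ = ‖A‖ ∧
        ‖Matrix.toEuclideanCLM (𝕜 := ℂ) B y‖ = ‖B‖ := by
  have hn : 0 < n := by
    rcases Nat.eq_zero_or_pos n with rfl | h
    · exact absurd (Subsingleton.elim A 0) hA
    · exact h
  set T := Matrix.toEuclideanCLM (𝕜 := ℂ) A with hT
  set S := Matrix.toEuclideanCLM (𝕜 := ℂ) B with hS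
  have hmul : Matrix.toEuclideanCLM (𝕜 := ℂ) (A * Bᴴ) = T ∘L ContinuousLinearMap.adjoint S := by
    rw [map_mul, ← Matrix.star_eq_conjTranspose, map_star, star_eq_adjoint]
    rfl
  have h1 : ‖A * Bᴴ‖ = ‖T ∘L ContinuousLinearMap.adjoint S‖ := by
    rw [Matrix.cstar_norm_def, hmul]
  have h2 : ‖A‖ = ‖T‖ := Matrix.cstar_norm_def A
  have h3 : ‖B‖ = ‖S‖ := Matrix.cstar_norm_def B
  rw [h1, h2, h3]
  have hT0 : T ≠ 0 := fun h => hA <| by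
    have h2' : Matrix.toEuclideanCLM (𝕜 := ℂ) A = Matrix.toEuclideanCLM (𝕜 := ℂ) 0 := by
      rw [map_zero, ← hT, h]
    exact EquivLike.injective _ h2'
  have hS0 : S ≠ 0 := fun h => hB <| by
    have h2' : Matrix.toEuclideanCLM (𝕜 := ℂ) B = Matrix.toEuclideanCLM (𝕜 := ℂ) 0 := by
      rw [map_zero, ← hS, h]
    exact EquivLike.injective _ h2'
  exact abstract hn T S hT0 hS0
end
end

section
/- Let A be a nonscalar 2×2 complex matrix. Then A + tI is a scalar multiple of a unitary matrix for every real t if and only if A ∈ ℝI + 𝔸₂⁰(ℂ), the set of sums of a real multiple of the identity and a trace-zero skew-Hermitian matrix. -/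
open scoped Matrix Matrix.Norms.L2Operator

noncomputable section

private lemma key_bwd (r t : ℝ) (K : Matrix (Fin 2) (Fin 2) ℂ)
    (hk00 : (starRingEnd ℂ) (K 0 0) = -K 0 0)
    (hk10 : K 1 0 = -(starRingEnd ℂ) (K 0 1))
    (hk11 : K 1 1 = -K 0 0) :
    ((r : ℂ) • (1 : Matrix (Fin 2) (Fin 2) ℂ) + K + (t:ℂ) • 1)ᴴ *
      ((r : ℂ) • (1 : Matrix (Fin 2) (Fin 2) ℂ) + K + (t:ℂ) • 1) =
    (((r+t)^2 + Complex.normSq (K 0 0) + Complex.normSq (K 0 1) : ℝ) : ℂ) • 1 := by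
  have m0 : K 0 0 * (starRingEnd ℂ) (K 0 0) = (Complex.normSq (K 0 0) : ℂ) := Complex.mul_conj _
  have m1 : K 0 1 * (starRingEnd ℂ) (K 0 1) = (Complex.normSq (K 0 1) : ℂ) := Complex.mul_conj _
  ext i j
  fin_cases i <;> fin_cases j <;>
    simp [Matrix.mul_apply, Fin.sum_univ_two, Matrix.one_apply, hk10, hk11,
      Complex.star_def, Complex.conj_conj] <;>
    push_cast <;>
  [ linear_combination ((r:ℂ)+(t:ℂ))*hk00 + m0 + m1;
    linear_combination (K 0 1)*hk00;
    linear_combination ((starRingEnd ℂ) (K 0 1))*hk00;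
    linear_combination (-((r:ℂ)+(t:ℂ)))*hk00 + m0 + m1 ]

/-- For a nonscalar 2×2 complex matrix A, A + tI is a scalar multiple of a unitary for
every real t iff A = rI + K with r real and K trace-zero skew-Hermitian. -/
theorem stmt12 (A : Matrix (Fin 2) (Fin 2) ℂ) (hA : ¬∃ c : ℂ, A = c • (1 : Matrix (Fin 2) (Fin 2) ℂ)) :
    (∀ t : ℝ, ∃ (c : ℂ) (U : Matrix (Fin 2) (Fin 2) ℂ), Uᴴ * U = 1 ∧
        A + (t : ℂ) • (1 : Matrix (Fin 2) (Fin 2) ℂ) = c • U) ↔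
      (∃ (r : ℝ) (K : Matrix (Fin 2) (Fin 2) ℂ), Kᴴ = -K ∧ K.trace = 0 ∧
        A = (r : ℂ) • (1 : Matrix (Fin 2) (Fin 2) ℂ) + K) := by
  constructor
  · intro h
    have key : ∀ t : ℝ, ∃ m : ℂ, (A + (t:ℂ) • (1 : Matrix (Fin 2) (Fin 2) ℂ))ᴴ *
        (A + (t:ℂ) • 1) = m • (1 : Matrix (Fin 2) (Fin 2) ℂ) := by
      intro t
      obtain ⟨c, U, hU, hE⟩ := h t
      refine ⟨star c * c, ?_⟩
      rw [hE, Matrix.conjTranspose_smul, Matrix.smul_mul, Matrix.mul_smul, hU, smul_smul]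
    obtain ⟨m0, h0⟩ := key 0
    obtain ⟨m1, h1⟩ := key 1
    simp only [Complex.ofReal_zero, zero_smul, add_zero, Complex.ofReal_one, one_smul] at h0 h1
    have p01 : (starRingEnd ℂ) (A 0 0) * A 0 1 + (starRingEnd ℂ) (A 1 0) * A 1 1 = 0 := by
      have := congrFun (congrFun h0 0) 1
      simpa [Matrix.mul_apply, Fin.sum_univ_two, Matrix.one_apply, Complex.star_def] using this
    have p10 : (starRingEnd ℂ) (A 0 1) * A 0 0 + (starRingEnd ℂ) (A 1 1) * A 1 0 = 0 := by
      have := congrFun (congrFun h0 1) 0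
      simpa [Matrix.mul_apply, Fin.sum_univ_two, Matrix.one_apply, Complex.star_def] using this
    have p00 : (starRingEnd ℂ) (A 0 0) * A 0 0 + (starRingEnd ℂ) (A 1 0) * A 1 0 = m0 := by
      have := congrFun (congrFun h0 0) 0
      simpa [Matrix.mul_apply, Fin.sum_univ_two, Matrix.one_apply, Complex.star_def] using this
    have p11 : (starRingEnd ℂ) (A 0 1) * A 0 1 + (starRingEnd ℂ) (A 1 1) * A 1 1 = m0 := by
      have := congrFun (congrFun h0 1) 1
      simpa [Matrix.mul_apply, Fin.sum_univ_two, Matrix.one_apply, Complex.star_def] using this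
    have q10 : (starRingEnd ℂ) (A 0 1) * (A 0 0 + 1) + ((starRingEnd ℂ) (A 1 1) + 1) * A 1 0 = 0 := by
      have := congrFun (congrFun h1 1) 0
      simpa [Matrix.mul_apply, Fin.sum_univ_two, Matrix.one_apply, Complex.star_def, map_add,
        mul_add, add_mul] using this
    have q00 : ((starRingEnd ℂ) (A 0 0) + 1) * (A 0 0 + 1) + (starRingEnd ℂ) (A 1 0) * A 1 0 = m1 := by
      have := congrFun (congrFun h1 0) 0
      simpa [Matrix.mul_apply, Fin.sum_univ_two, Matrix.one_apply, Complex.star_def, map_add] using this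
    have q11 : (starRingEnd ℂ) (A 0 1) * A 0 1 + ((starRingEnd ℂ) (A 1 1) + 1) * (A 1 1 + 1) = m1 := by
      have := congrFun (congrFun h1 1) 1
      simpa [Matrix.mul_apply, Fin.sum_univ_two, Matrix.one_apply, Complex.star_def, map_add] using this
    -- c = -conj b
    have hc : A 1 0 = -(starRingEnd ℂ) (A 0 1) := by
      linear_combination q10 - p10
    have hcc : (starRingEnd ℂ) (A 1 0) = -(A 0 1) := by
      rw [hc]; simp
    have hre : A 0 0 + (starRingEnd ℂ) (A 0 0) = A 1 1 + (starRingEnd ℂ) (A 1 1) := by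
      linear_combination (q00 - q11) - (p00 - p11)
    have hdiag : (starRingEnd ℂ) (A 0 0) * A 0 0 = (starRingEnd ℂ) (A 1 1) * A 1 1 := by
      linear_combination (p00 - p11) - ((starRingEnd ℂ) (A 1 0)) * hc + ((starRingEnd ℂ) (A 0 1)) * hcc
    have hbd : A 0 1 * ((starRingEnd ℂ) (A 0 0) - A 1 1) = 0 := by
      linear_combination p01 - (A 1 1) * hcc
    have hquad : (A 1 1 - (starRingEnd ℂ) (A 0 0)) * (A 1 1 - A 0 0) = 0 := by
      linear_combination (-(A 1 1)) * hre + hdiag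
    -- establish d = conj a
    have hd : A 1 1 = (starRingEnd ℂ) (A 0 0) := by
      rcases mul_eq_zero.1 hquad with h' | h'
      · exact sub_eq_zero.mp h'
      · have hda : A 1 1 = A 0 0 := sub_eq_zero.mp h'
        by_cases hb : A 0 1 = 0
        · exfalso
          refine hA ⟨A 0 0, ?_⟩
          ext i j
          fin_cases i <;> fin_cases j <;>
            simp [Matrix.one_apply, hb, hda, hc]
        · have := (mul_eq_zero.1 hbd).resolve_left hb
          exact (sub_eq_zero.mp this).symm
    have hra : A 0 0 + (starRingEnd ℂ) (A 0 0) = 2 * (((A 0 0).re : ℝ) : ℂ) := by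
      rw [Complex.add_conj]; push_cast; ring
    refine ⟨(A 0 0).re, A - (((A 0 0).re : ℝ) : ℂ) • 1, ?_, ?_, ?_⟩
    · ext i j
      fin_cases i <;> fin_cases j <;>
        simp [Matrix.conjTranspose_apply, Matrix.one_apply, Complex.star_def,
          Complex.conj_ofReal, hd, Complex.conj_conj] <;>
      first
        | linear_combination hra
        | linear_combination hcc
        | linear_combination hc
    · simp [Matrix.trace_fin_two, hd]
      linear_combination hra
    · ext i j; simp
  · rintro ⟨r, K, hskew, htr, hAeq⟩ t
    have hk00 : (starRingEnd ℂ) (K 0 0) = -K 0 0 := by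
      have := congrFun (congrFun hskew 0) 0
      simpa [Matrix.conjTranspose_apply, Complex.star_def] using this
    have hk01 : (starRingEnd ℂ) (K 1 0) = -K 0 1 := by
      have := congrFun (congrFun hskew 0) 1
      simpa [Matrix.conjTranspose_apply, Complex.star_def] using this
    have hk10 : K 1 0 = -(starRingEnd ℂ) (K 0 1) := by
      rw [← Complex.conj_conj (K 1 0), hk01, map_neg]
    have hk11 : K 1 1 = -K 0 0 := by
      rw [Matrix.trace_fin_two] at htr
      linear_combination htr
    have hKne : ¬(K 0 0 = 0 ∧ K 0 1 = 0) := by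
      rintro ⟨hz0, hz1⟩
      refine hA ⟨(r : ℂ), ?_⟩
      rw [hAeq]
      ext i j
      fin_cases i <;> fin_cases j <;>
        simp [Matrix.one_apply, hz0, hz1, hk10, hk11]
    set e : ℝ := (r+t)^2 + Complex.normSq (K 0 0) + Complex.normSq (K 0 1) with he_def
    have he : 0 < e := by
      rcases Decidable.not_and_iff_or_not.mp hKne with h' | h'
      · have := Complex.normSq_pos.2 h'
        nlinarith [sq_nonneg (r+t), Complex.normSq_nonneg (K 0 1)]
      · have := Complex.normSq_pos.2 h'
        nlinarith [sq_nonneg (r+t), Complex.normSq_nonneg (K 0 0)]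
    set ρ : ℝ := Real.sqrt e with hρ_def
    have hρsq : ρ^2 = e := Real.sq_sqrt he.le
    have hρpos : 0 < ρ := Real.sqrt_pos.2 he
    have hρne : ((ρ : ℝ) : ℂ) ≠ 0 := by
      simpa using ne_of_gt hρpos
    have keyM : (A + (t:ℂ) • (1 : Matrix (Fin 2) (Fin 2) ℂ))ᴴ * (A + (t:ℂ) • 1)
        = ((e : ℝ) : ℂ) • 1 := by
      rw [hAeq]
      exact key_bwd r t K hk00 hk10 hk11
    have hec : ((e : ℝ) : ℂ) = ((ρ : ℝ) : ℂ)^2 := by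
      rw [← hρsq]; push_cast; ring
    refine ⟨((ρ : ℝ) : ℂ), (((ρ : ℝ) : ℂ))⁻¹ • (A + (t:ℂ) • 1), ?_, ?_⟩
    · rw [Matrix.conjTranspose_smul, Matrix.smul_mul, Matrix.mul_smul, keyM, smul_smul, smul_smul,
        hec]
      have h2 : star (((ρ : ℝ) : ℂ))⁻¹ * (((ρ : ℝ) : ℂ))⁻¹ * ((ρ : ℝ) : ℂ)^2 = 1 := by
        rw [star_inv₀, Complex.star_def, Complex.conj_ofReal]
        field_simp
      rw [h2, one_smul]
    · rw [smul_smul, mul_inv_cancel₀ hρne, one_smul]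
end
end

section
/- Let D ∈ M₃(ℝ) be diagonal positive definite. If D⁻¹(𝔸₃(ℝ) + ℝI) = (𝔸₃(ℝ) + ℝI)D⁻¹ as sets, where 𝔸₃(ℝ) is the space of 3×3 real skew-symmetric matrices, then D is a scalar matrix. -/
open scoped Matrix Matrix.Norms.L2Operator

noncomputable section

/-- If D is diagonal positive definite and D⁻¹(𝔸₃(ℝ)+ℝI) = (𝔸₃(ℝ)+ℝI)D⁻¹ as sets, then
D is scalar. -/
theorem stmt13 (d : Fin 3 → ℝ) (hpos : ∀ i, 0 < d i)
    (D : Matrix (Fin 3) (Fin 3) ℝ) (hD : D = Matrix.diagonal d)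
    (h : {X : Matrix (Fin 3) (Fin 3) ℝ | ∃ (A : Matrix (Fin 3) (Fin 3) ℝ) (l : ℝ),
            Aᵀ = -A ∧ X = D⁻¹ * (A + l • (1 : Matrix (Fin 3) (Fin 3) ℝ))}
        = {X : Matrix (Fin 3) (Fin 3) ℝ | ∃ (B : Matrix (Fin 3) (Fin 3) ℝ) (m : ℝ),
            Bᵀ = -B ∧ X = (B + m • (1 : Matrix (Fin 3) (Fin 3) ℝ)) * D⁻¹}) :
    ∃ c : ℝ, D = c • (1 : Matrix (Fin 3) (Fin 3) ℝ) := by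
  subst hD
  have hdet : (Matrix.diagonal d).det ≠ 0 := by
    rw [Matrix.det_diagonal]
    exact Finset.prod_ne_zero_iff.2 fun i _ => (hpos i).ne'
  have hDDinv : Matrix.diagonal d * (Matrix.diagonal d)⁻¹ = 1 :=
    Matrix.mul_nonsing_inv _ hdet.isUnit
  have hDinvD : (Matrix.diagonal d)⁻¹ * Matrix.diagonal d = 1 :=
    Matrix.nonsing_inv_mul _ hdet.isUnit
  have key : ∀ i j : Fin 3, i ≠ j → d i = d j := by
    intro i j hij
    set A : Matrix (Fin 3) (Fin 3) ℝ :=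
      Matrix.single i j 1 - Matrix.single j i 1 with hA
    have hskew : Aᵀ = -A := by
      ext a b
      simp only [hA, Matrix.transpose_apply, Matrix.sub_apply, Matrix.neg_apply,
        Matrix.single, Matrix.of_apply]
      split_ifs <;> simp_all
    have hmem : (Matrix.diagonal d)⁻¹ * (A + (0:ℝ) • (1 : Matrix (Fin 3) (Fin 3) ℝ)) ∈
        {X : Matrix (Fin 3) (Fin 3) ℝ | ∃ (A : Matrix (Fin 3) (Fin 3) ℝ) (l : ℝ),
            Aᵀ = -A ∧ X = (Matrix.diagonal d)⁻¹ * (A + l • (1 : Matrix (Fin 3) (Fin 3) ℝ))} :=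
      ⟨A, 0, hskew, rfl⟩
    rw [h] at hmem
    obtain ⟨B, m, hB, heq⟩ := hmem
    have heq' : (Matrix.diagonal d)⁻¹ * A
        = (B + m • (1 : Matrix (Fin 3) (Fin 3) ℝ)) * (Matrix.diagonal d)⁻¹ := by
      simpa using heq
    have hmain : A * Matrix.diagonal d
        = Matrix.diagonal d * (B + m • (1 : Matrix (Fin 3) (Fin 3) ℝ)) := by
      have := congrArg (fun M => Matrix.diagonal d * M * Matrix.diagonal d) heq'
      simp only [← Matrix.mul_assoc, hDDinv, Matrix.one_mul] at this
      rw [Matrix.mul_assoc, Matrix.mul_assoc] at this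
      rw [hDinvD, Matrix.mul_one] at this
      exact this
    have e1 := congrFun (congrFun hmain i) j
    have e2 := congrFun (congrFun hmain j) i
    simp [Matrix.mul_diagonal, Matrix.diagonal_mul, hA, Matrix.sub_apply,
      Matrix.add_apply, Matrix.smul_apply, Matrix.one_apply, hij, hij.symm,
      Matrix.single_apply_same, Matrix.single_apply_of_ne] at e1 e2
    have hBji : B j i = -B i j := by
      have := congrFun (congrFun hB i) j
      simpa [Matrix.transpose_apply] using this
    rw [hBji] at e2
    nlinarith [hpos i, hpos j, e1, e2]
  have h01 : d 0 = d 1 := key 0 1 (by decide)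
  have h02 : d 0 = d 2 := key 0 2 (by decide)
  have h12 : d 1 = d 2 := h01 ▸ h02
  refine ⟨d 0, ?_⟩
  ext a b
  fin_cases a <;> fin_cases b <;>
    simp [Matrix.diagonal, Matrix.one_apply, h01, h02, h12]
end
end

section
/- Let D ∈ M₃(ℂ) be diagonal positive definite with decreasing diagonal entries, and suppose D is not scalar. Then the real vector space D⁻¹(𝔸₃(ℂ)+ℝI) ∩ (𝔸₃(ℂ)+ℝI)D⁻¹ has real dimension at most 6, where 𝔸₃(ℂ) denotes 3×3 skew-Hermitian complex matrices. -/
open scoped Matrix Matrix.Norms.L2Operator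

noncomputable section

open Complex

private def entryLM (j k : Fin 3) : Matrix (Fin 3) (Fin 3) ℂ →ₗ[ℝ] ℂ where
  toFun X := X j k
  map_add' _ _ := rfl
  map_smul' _ _ := rfl

private lemma allEq (d : Fin 3 → ℝ) (h1 : d 0 = d 1) (h2 : d 1 = d 2) :
    ∀ i j : Fin 3, d i = d j := by
  intro i j
  fin_cases i <;> fin_cases j <;> simp_all

@[simp] private lemma entryLM_apply (j k : Fin 3) (X : Matrix (Fin 3) (Fin 3) ℂ) :
    entryLM j k X = X j k := rfl

/-- For D diagonal positive definite with decreasing, non-constant diagonal, the real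
space D⁻¹(𝔸₃(ℂ)+ℝI) ∩ (𝔸₃(ℂ)+ℝI)D⁻¹ has real dimension at most 6. -/
theorem stmt16 (d : Fin 3 → ℝ) (hpos : ∀ i, 0 < d i)
    (hmono : ∀ i j : Fin 3, i ≤ j → d j ≤ d i) (hns : ¬∀ i j : Fin 3, d i = d j)
    (D : Matrix (Fin 3) (Fin 3) ℂ) (hD : D = Matrix.diagonal fun i => (d i : ℂ))
    (V : Submodule ℝ (Matrix (Fin 3) (Fin 3) ℂ))
    (hV : V = skewAdjoint.submodule ℝ (Matrix (Fin 3) (Fin 3) ℂ)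
        ⊔ Submodule.span ℝ ({1} : Set (Matrix (Fin 3) (Fin 3) ℂ))) :
    Module.finrank ℝ
      ↥(Submodule.map (LinearMap.mulLeft ℝ D⁻¹) V ⊓ Submodule.map (LinearMap.mulRight ℝ D⁻¹) V)
      ≤ 6 := by
  subst hD hV
  set D : Matrix (Fin 3) (Fin 3) ℂ := Matrix.diagonal fun i => (d i : ℂ) with hD
  have hd0 : ∀ i, (d i : ℂ) ≠ 0 := fun i => by exact_mod_cast (hpos i).ne'
  have hdet : IsUnit D.det := by
    rw [hD, Matrix.det_diagonal]
    exact (Finset.prod_ne_zero_iff.mpr fun i _ => hd0 i).isUnit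
  set P := Submodule.map (LinearMap.mulLeft ℝ D⁻¹)
      (skewAdjoint.submodule ℝ (Matrix (Fin 3) (Fin 3) ℂ)
        ⊔ Submodule.span ℝ ({1} : Set (Matrix (Fin 3) (Fin 3) ℂ)))
      ⊓ Submodule.map (LinearMap.mulRight ℝ D⁻¹)
      (skewAdjoint.submodule ℝ (Matrix (Fin 3) (Fin 3) ℂ)
        ⊔ Submodule.span ℝ ({1} : Set (Matrix (Fin 3) (Fin 3) ℂ))) with hP
  -- the equations satisfied by members of P
  have hmem : ∀ X ∈ P, ∃ lam mu : ℝ,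
      (∀ j k, (d k : ℂ) * (starRingEnd ℂ) (X k j) + (d j : ℂ) * X j k
          = if j = k then ((2 * lam : ℝ) : ℂ) else 0) ∧
      (∀ j k, (d j : ℂ) * (starRingEnd ℂ) (X k j) + (d k : ℂ) * X j k
          = if j = k then ((2 * mu : ℝ) : ℂ) else 0) := by
    intro X hX
    rw [hP, Submodule.mem_inf] at hX
    obtain ⟨⟨A, hA, hAX⟩, ⟨B, hB, hBX⟩⟩ := hX
    rw [SetLike.mem_coe, Submodule.mem_sup] at hA hB
    obtain ⟨S, hS, T, hT, rfl⟩ := hA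
    obtain ⟨S', hS', T', hT', rfl⟩ := hB
    rw [Submodule.mem_span_singleton] at hT hT'
    obtain ⟨lam, rfl⟩ := hT
    obtain ⟨mu, rfl⟩ := hT'
    have hSs : star S = -S := skewAdjoint.mem_iff.mp hS
    have hSs' : star S' = -S' := skewAdjoint.mem_iff.mp hS'
    have hDX : D * X = S + lam • 1 := by
      rw [← hAX, LinearMap.mulLeft_apply, Matrix.mul_nonsing_inv_cancel_left _ _ hdet]
    have hXD : X * D = S' + mu • 1 := by
      rw [← hBX, LinearMap.mulRight_apply, Matrix.nonsing_inv_mul_cancel_right _ _ hdet]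
    refine ⟨lam, mu, ?_, ?_⟩
    · intro j k
      have h1 : star (D * X) + D * X = ((2 * lam : ℝ)) • (1 : Matrix (Fin 3) (Fin 3) ℂ) := by
        rw [hDX, star_add, hSs, star_smul, star_trivial, star_one]
        module
      rw [hD] at h1
      have h3 := Matrix.ext_iff.mpr h1 j k
      rw [Matrix.add_apply, Matrix.star_apply, Matrix.diagonal_mul, Matrix.diagonal_mul,
        Matrix.smul_apply, Matrix.one_apply, star_mul', Complex.star_def,
        Complex.conj_ofReal] at h3
      rw [show ((2 * lam : ℝ)) • (if j = k then (1 : ℂ) else 0)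
          = if j = k then ((2 * lam : ℝ) : ℂ) else 0 by split <;> simp [Complex.real_smul]] at h3
      linear_combination h3
    · intro j k
      have h1 : star (X * D) + X * D = ((2 * mu : ℝ)) • (1 : Matrix (Fin 3) (Fin 3) ℂ) := by
        rw [hXD, star_add, hSs', star_smul, star_trivial, star_one]
        module
      rw [hD] at h1
      have h3 := Matrix.ext_iff.mpr h1 j k
      rw [Matrix.add_apply, Matrix.star_apply, Matrix.mul_diagonal, Matrix.mul_diagonal,
        Matrix.smul_apply, Matrix.one_apply, star_mul', Complex.star_def,
        Complex.conj_ofReal] at h3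
      rw [show ((2 * mu : ℝ)) • (if j = k then (1 : ℂ) else 0)
          = if j = k then ((2 * mu : ℝ) : ℂ) else 0 by split <;> simp [Complex.real_smul]] at h3
      linear_combination h3
  -- basic distinctness facts
  have hne' : ¬(d 0 = d 1 ∧ d 1 = d 2) := fun ⟨h1, h2⟩ => hns (allEq d h1 h2)
  have h02 : d 0 ≠ d 2 := by
    intro h
    have l1 : d 1 ≤ d 0 := hmono 0 1 (by decide)
    have l2 : d 2 ≤ d 1 := hmono 1 2 (by decide)
    exact hne' ⟨by linarith, by linarith⟩
  have sqne : ∀ j k : Fin 3, d j ≠ d k → ((d j : ℂ) ^ 2 - (d k : ℂ) ^ 2) ≠ 0 := by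
    intro j k hjk h
    apply hjk
    have h2 : (d j : ℂ) ^ 2 = (d k : ℂ) ^ 2 := by linear_combination h
    have h3 : d j ^ 2 = d k ^ 2 := by exact_mod_cast h2
    nlinarith [hpos j, hpos k]
  -- the key injectivity fact
  have key : ∀ X ∈ P, X 0 0 = 0 → X 0 1 + X 1 2 = 0 → (X 1 1).im = 0 → (X 2 2).im = 0 →
      X = 0 := by
    intro X hX h00 h0112 h11 h22
    obtain ⟨lam, mu, e1, e2⟩ := hmem X hX
    have o1 : ∀ j k, j ≠ k → (d k : ℂ) * (starRingEnd ℂ) (X k j) + (d j : ℂ) * X j k = 0 := by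
      intro j k h; simpa [h] using e1 j k
    have o2 : ∀ j k, j ≠ k → (d j : ℂ) * (starRingEnd ℂ) (X k j) + (d k : ℂ) * X j k = 0 := by
      intro j k h; simpa [h] using e2 j k
    have nz : ∀ j k : Fin 3, j ≠ k → d j ≠ d k → X j k = 0 := by
      intro j k hjk hd
      have h3 : ((d j : ℂ) ^ 2 - (d k : ℂ) ^ 2) * X j k = 0 := by
        linear_combination (d j : ℂ) * o1 j k hjk - (d k : ℂ) * o2 j k hjk
      exact (mul_eq_zero.mp h3).resolve_left (sqne j k hd)
    -- lam = 0
    have hlam : lam = 0 := by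
      have h := e1 0 0
      rw [if_pos rfl] at h
      have h2 : ((2 * lam : ℝ) : ℂ) = 0 := by rw [← h, h00]; simp
      have h3 : (2 * lam : ℝ) = 0 := by exact_mod_cast h2
      linarith
    -- diagonal entries vanish
    have diag : ∀ j, (X j j).im = 0 → X j j = 0 := by
      intro j him
      have h : (d j : ℂ) * ((starRingEnd ℂ) (X j j) + X j j) = 0 := by
        rw [mul_add]
        simpa [hlam] using e1 j j
      have h2 : (starRingEnd ℂ) (X j j) + X j j = 0 := by
        rcases mul_eq_zero.mp h with h | h
        · exact absurd h (hd0 j)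
        · exact h
      have hre : (X j j).re = 0 := by
        have := congrArg Complex.re h2
        simp only [Complex.add_re, Complex.conj_re, Complex.zero_re] at this
        linarith
      exact Complex.ext hre him
    have hx11 : X 1 1 = 0 := diag 1 h11
    have hx22 : X 2 2 = 0 := diag 2 h22
    have hx02 : X 0 2 = 0 := nz 0 2 (by decide) h02
    have hx20 : X 2 0 = 0 := nz 2 0 (by decide) (Ne.symm h02)
    -- the (0,1)/(1,2) entries
    have hx01x12 : X 0 1 = 0 ∧ X 1 2 = 0 := by
      by_cases h01 : d 0 = d 1
      · have h12 : d 1 ≠ d 2 := fun h => hne' ⟨h01, h⟩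
        have hx12 : X 1 2 = 0 := nz 1 2 (by decide) h12
        have hx01 : X 0 1 = 0 := by linear_combination h0112 - hx12
        exact ⟨hx01, hx12⟩
      · have hx01 : X 0 1 = 0 := nz 0 1 (by decide) h01
        have hx12 : X 1 2 = 0 := by linear_combination h0112 - hx01
        exact ⟨hx01, hx12⟩
    obtain ⟨hx01, hx12⟩ := hx01x12
    -- mirror entries
    have hx10 : X 1 0 = 0 := by
      have h := o1 0 1 (by decide)
      rw [hx01, mul_zero, add_zero] at h
      have h2 : (starRingEnd ℂ) (X 1 0) = 0 := (mul_eq_zero.mp h).resolve_left (hd0 1)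
      simpa using congrArg (starRingEnd ℂ) h2
    have hx21 : X 2 1 = 0 := by
      have h := o1 1 2 (by decide)
      rw [hx12, mul_zero, add_zero] at h
      have h2 : (starRingEnd ℂ) (X 2 1) = 0 := (mul_eq_zero.mp h).resolve_left (hd0 2)
      simpa using congrArg (starRingEnd ℂ) h2
    ext i j
    rw [Matrix.zero_apply]
    fin_cases i <;> fin_cases j <;>
      first
        | exact h00 | exact hx01 | exact hx02 | exact hx10 | exact hx11
        | exact hx12 | exact hx20 | exact hx21 | exact hx22
  -- build the injection into a 6-dimensional space
  let f : Matrix (Fin 3) (Fin 3) ℂ →ₗ[ℝ] ℂ × ℂ × ℝ × ℝ :=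
    (entryLM 0 0).prod ((entryLM 0 1 + entryLM 1 2).prod
      ((Complex.imLm.comp (entryLM 1 1)).prod (Complex.imLm.comp (entryLM 2 2))))
  have hinj : Function.Injective (f.domRestrict P) := by
    rw [← LinearMap.ker_eq_bot]
    rw [LinearMap.ker_eq_bot']
    rintro ⟨X, hX⟩ hfX
    have h := Prod.mk.injEq .. ▸ hfX
    simp only [LinearMap.domRestrict_apply, f, LinearMap.prod_apply, Function.prod,
      LinearMap.add_apply, LinearMap.comp_apply, entryLM_apply, Complex.imLm_coe,
      Prod.mk_eq_zero] at hfX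
    obtain ⟨a, b, c, e⟩ := hfX
    exact Subtype.ext (key X hX a b c e)
  calc Module.finrank ℝ ↥P ≤ Module.finrank ℝ (ℂ × ℂ × ℝ × ℝ) :=
        LinearMap.finrank_le_finrank_of_injective hinj
    _ = 6 := by
        simp [Module.finrank_prod, Complex.finrank_real_complex]
end
end

section
/- Fix c > 0 and define the linear map Φ_c : M₂(ℝ) → M₂(ℝ) that is the identity on span{I₂, E₁₂−E₂₁} and multiplication by c on span{E₁₁−E₂₂, E₁₂+E₂₁}. Then for all A, B ∈ M₂(ℝ): if ‖AB‖ = ‖A‖·‖B‖ (spectral norm) then ‖Φ_c(A)Φ_c(B)‖ = ‖Φ_c(A)‖·‖Φ_c(B)‖. -/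
open scoped Matrix Matrix.Norms.L2Operator

noncomputable section

section Aux

/-- The real 2×2 matrix corresponding to `v ↦ z v + w (conj v)` on `ℂ ≅ ℝ²`. -/
def Mzw (z w : ℂ) : Matrix (Fin 2) (Fin 2) ℝ :=
  !![z.re + w.re, -z.im + w.im; z.im + w.im, z.re - w.re]

lemma Mzw_surj (A : Matrix (Fin 2) (Fin 2) ℝ) :
    A = Mzw ⟨(A 0 0 + A 1 1)/2, (A 1 0 - A 0 1)/2⟩ ⟨(A 0 0 - A 1 1)/2, (A 0 1 + A 1 0)/2⟩ := by
  ext i j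
  fin_cases i <;> fin_cases j <;> simp [Mzw] <;> ring

lemma Mzw_mul (z₁ w₁ z₂ w₂ : ℂ) :
    Mzw z₁ w₁ * Mzw z₂ w₂
      = Mzw (z₁ * z₂ + w₁ * (starRingEnd ℂ) w₂) (z₁ * w₂ + w₁ * (starRingEnd ℂ) z₂) := by
  ext i j
  fin_cases i <;> fin_cases j <;>
    simp [Mzw, Matrix.mul_apply, Fin.sum_univ_two] <;> ring

lemma mulVec_norm (z w : ℂ) (v : EuclideanSpace ℝ (Fin 2)) :
    ‖(EuclideanSpace.equiv (Fin 2) ℝ).symm ((Mzw z w) *ᵥ v)‖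
      = ‖(z * (v 0 + v 1 * Complex.I) + w * (starRingEnd ℂ) (v 0 + v 1 * Complex.I))‖ := by
  rw [EuclideanSpace.norm_eq, Complex.norm_def, Complex.normSq_apply]
  congr 1
  simp [Mzw, Matrix.mulVec, dotProduct, Fin.sum_univ_two, Real.norm_eq_abs, sq_abs]
  ring

lemma vec_norm (v : EuclideanSpace ℝ (Fin 2)) :
    ‖v‖ = ‖(v 0 + v 1 * Complex.I)‖ := by
  rw [EuclideanSpace.norm_eq, Complex.norm_def, Complex.normSq_apply]
  congr 1
  simp [Fin.sum_univ_two, Real.norm_eq_abs, sq_abs]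
  ring

lemma exists_unit (z w : ℂ) : ∃ u : ℂ, ‖u‖ = 1 ∧
    ‖(z * u + w * (starRingEnd ℂ) u)‖ = ‖z‖ + ‖w‖ := by
  by_cases hz : z = 0
  · refine ⟨1, by simp, ?_⟩; simp [hz]
  by_cases hw : w = 0
  · refine ⟨(starRingEnd ℂ) z / (‖z‖ : ℂ), ?_, ?_⟩
    · simp [norm_div, map_div₀, Complex.norm_conj, div_self, (norm_ne_zero_iff.mpr hz)]
    · simp [hw, div_eq_mul_inv, norm_mul, norm_inv, map_mul, Complex.norm_conj, map_inv₀,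
        mul_inv_cancel₀ ((norm_ne_zero_iff.mpr hz))]
  · have hza : (‖z‖ : ℝ) ≠ 0 := (norm_ne_zero_iff.mpr hz)
    have hwa : (‖w‖ : ℝ) ≠ 0 := (norm_ne_zero_iff.mpr hw)
    set ζ : ℂ := ((starRingEnd ℂ) z * w) / ((‖z‖ : ℂ) * (‖w‖ : ℂ)) with hζ
    have hζabs : ‖ζ‖ = 1 := by
      rw [hζ, norm_div, norm_mul, norm_mul, Complex.norm_conj, Complex.norm_real, Real.norm_eq_abs,
        Complex.norm_real, Real.norm_eq_abs, _root_.abs_of_nonneg (norm_nonneg z),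
        _root_.abs_of_nonneg (norm_nonneg w)]
      field_simp
    set u : ℂ := Complex.exp ((ζ.arg / 2 : ℝ) * Complex.I) with hu
    have hu1 : ‖u‖ = 1 := Complex.norm_exp_ofReal_mul_I _
    have husq : u ^ 2 = ζ := by
      rw [hu, ← Complex.exp_nat_mul]
      push_cast
      rw [show (2:ℂ) * ((ζ.arg:ℂ) / 2 * Complex.I) = (ζ.arg : ℂ) * Complex.I by ring]
      conv_rhs => rw [← Complex.norm_mul_exp_arg_mul_I ζ]
      rw [hζabs]; simp
    have huu : u * (starRingEnd ℂ) u = 1 := by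
      rw [Complex.mul_conj]; norm_cast; rw [← Complex.sq_norm, hu1]; norm_num
    have hzz : z * (starRingEnd ℂ) z = ((‖z‖ : ℂ))^2 := by
      rw [Complex.mul_conj]; norm_cast; rw [← Complex.sq_norm]
    have key : z * u + w * (starRingEnd ℂ) u = (starRingEnd ℂ) u * (z * ζ + w) := by
      rw [← husq]; linear_combination (-(z * u)) * huu
    have hval : z * ζ + w = (((‖z‖ + ‖w‖) / ‖w‖ : ℝ) : ℂ) * w := by
      rw [hζ]
      have hza' : (‖z‖ : ℂ) ≠ 0 := by exact_mod_cast hza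
      have hwa' : (‖w‖ : ℂ) ≠ 0 := by exact_mod_cast hwa
      push_cast
      field_simp
      linear_combination hzz
    refine ⟨u, hu1, ?_⟩
    rw [key, norm_mul, Complex.norm_conj, hu1, one_mul, hval, norm_mul, Complex.norm_real, Real.norm_eq_abs,
      _root_.abs_of_nonneg (by positivity : (0:ℝ) ≤ (‖z‖ + ‖w‖) / ‖w‖)]
    field_simp

lemma norm_Mzw (z w : ℂ) : ‖Mzw z w‖ = ‖z‖ + ‖w‖ := by
  apply le_antisymm
  · rw [Matrix.l2_opNorm_def]
    apply ContinuousLinearMap.opNorm_le_bound _ (by positivity)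
    intro x
    have h1 : ‖(Matrix.toEuclideanLin.trans LinearMap.toContinuousLinearMap) (Mzw z w) x‖
        = ‖(EuclideanSpace.equiv (Fin 2) ℝ).symm ((Mzw z w) *ᵥ x)‖ := rfl
    rw [h1, mulVec_norm, vec_norm]
    calc ‖(z * (x 0 + x 1 * Complex.I) + w * (starRingEnd ℂ) (x 0 + x 1 * Complex.I))‖
        ≤ ‖(z * (x 0 + x 1 * Complex.I))‖
            + ‖(w * (starRingEnd ℂ) (x 0 + x 1 * Complex.I))‖ := norm_add_le _ _
      _ = (‖z‖ + ‖w‖) * ‖(x 0 + x 1 * Complex.I)‖ := by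
          rw [norm_mul, norm_mul, Complex.norm_conj]; ring
  · obtain ⟨u, hu1, hu2⟩ := exists_unit z w
    set v : EuclideanSpace ℝ (Fin 2) := (WithLp.equiv 2 (Fin 2 → ℝ)).symm ![u.re, u.im] with hv
    have hv0 : v 0 = u.re := rfl
    have hv1 : v 1 = u.im := rfl
    have hvu : (v 0 : ℂ) + v 1 * Complex.I = u := by rw [hv0, hv1, Complex.re_add_im]
    have hnv : ‖v‖ = 1 := by rw [vec_norm, hvu, hu1]
    have := Matrix.l2_opNorm_mulVec (Mzw z w) v
    rw [mulVec_norm, hvu, hu2, hnv, mul_one] at this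
    exact this

lemma norm_add_smul (u v : ℂ) (t : ℝ) (ht : 0 ≤ t)
    (h : ‖(u + v)‖ = ‖u‖ + ‖v‖) :
    ‖(u + t • v)‖ = ‖u‖ + t * ‖v‖ := by
  have hray : SameRay ℝ u v := by
    rw [sameRay_iff_norm_add]
    simpa using h
  have hray2 : SameRay ℝ u (t • v) := hray.nonneg_smul_right ht
  have := (sameRay_iff_norm_add.mp hray2)
  simpa [norm_smul, Real.norm_eq_abs, _root_.abs_of_nonneg ht] using this

lemma eqcase (c : ℝ) (hc : 0 < c) (z₁ w₁ z₂ w₂ : ℂ)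
    (h : ‖(z₁ * z₂ + w₁ * (starRingEnd ℂ) w₂)‖
          + ‖(z₁ * w₂ + w₁ * (starRingEnd ℂ) z₂)‖
        = (‖z₁‖ + ‖w₁‖) * (‖z₂‖ + ‖w₂‖)) :
    ‖(z₁ * z₂ + (c^2 : ℝ) • (w₁ * (starRingEnd ℂ) w₂))‖
          + c * ‖(z₁ * w₂ + w₁ * (starRingEnd ℂ) z₂)‖
        = (‖z₁‖ + c * ‖w₁‖) * (‖z₂‖ + c * ‖w₂‖) := by
  have hA : ‖(z₁ * z₂ + w₁ * (starRingEnd ℂ) w₂)‖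
      ≤ ‖z₁‖ * ‖z₂‖ + ‖w₁‖ * ‖w₂‖ := by
    refine le_trans (norm_add_le _ _) ?_
    simp [norm_mul, Complex.norm_conj]
  have hB : ‖(z₁ * w₂ + w₁ * (starRingEnd ℂ) z₂)‖
      ≤ ‖z₁‖ * ‖w₂‖ + ‖w₁‖ * ‖z₂‖ := by
    refine le_trans (norm_add_le _ _) ?_
    simp [norm_mul, Complex.norm_conj]
  have e1 : ‖(z₁ * z₂ + w₁ * (starRingEnd ℂ) w₂)‖
      = ‖z₁‖ * ‖z₂‖ + ‖w₁‖ * ‖w₂‖ := by nlinarith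
  have e2 : ‖(z₁ * w₂ + w₁ * (starRingEnd ℂ) z₂)‖
      = ‖z₁‖ * ‖w₂‖ + ‖w₁‖ * ‖z₂‖ := by nlinarith
  have e1' : ‖(z₁ * z₂)‖ = ‖z₁‖ * ‖z₂‖ := norm_mul _ _
  have e1'' : ‖(w₁ * (starRingEnd ℂ) w₂)‖ = ‖w₁‖ * ‖w₂‖ := by
    simp [norm_mul, Complex.norm_conj]
  have key := norm_add_smul (z₁ * z₂) (w₁ * (starRingEnd ℂ) w₂) (c^2) (by positivity)
    (by rw [e1, e1', e1''])
  rw [key, e1', e1'', e2]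
  ring

lemma Phi_Mzw (c : ℝ) (Phi : Matrix (Fin 2) (Fin 2) ℝ → Matrix (Fin 2) (Fin 2) ℝ)
    (hlin : IsLinearMap ℝ Phi)
    (h1 : ∀ a b : ℝ, Phi !![a, b; -b, a] = !![a, b; -b, a])
    (h2 : ∀ a b : ℝ, Phi !![a, b; b, -a] = c • !![a, b; b, -a])
    (z w : ℂ) : Phi (Mzw z w) = Mzw z ((c : ℂ) * w) := by
  have hsplit : Mzw z w = !![z.re, -z.im; -(-z.im), z.re] + !![w.re, w.im; w.im, -w.re] := by
    ext i j; fin_cases i <;> fin_cases j <;> simp [Mzw] <;> ring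
  rw [hsplit, hlin.map_add, h1 z.re (-z.im), h2 w.re w.im]
  ext i j
  fin_cases i <;> fin_cases j <;>
    simp [Mzw, Complex.mul_re, Complex.mul_im] <;> ring

end Aux

/-- The map Φ_c (identity on span{I, E₁₂−E₂₁}, multiplication by c on
span{E₁₁−E₂₂, E₁₂+E₂₁}) preserves norm-multiplicative pairs. -/
theorem stmt18 (c : ℝ) (hc : 0 < c) (Phi : Matrix (Fin 2) (Fin 2) ℝ → Matrix (Fin 2) (Fin 2) ℝ)
    (hlin : IsLinearMap ℝ Phi)
    (h1 : ∀ a b : ℝ, Phi !![a, b; -b, a] = !![a, b; -b, a])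
    (h2 : ∀ a b : ℝ, Phi !![a, b; b, -a] = c • !![a, b; b, -a]) :
    ∀ A B : Matrix (Fin 2) (Fin 2) ℝ, ‖A * B‖ = ‖A‖ * ‖B‖ →
      ‖Phi A * Phi B‖ = ‖Phi A‖ * ‖Phi B‖ := by
  intro A B hAB
  obtain ⟨z₁, w₁, rfl⟩ : ∃ z w, A = Mzw z w := ⟨_, _, Mzw_surj A⟩
  obtain ⟨z₂, w₂, rfl⟩ : ∃ z w, B = Mzw z w := ⟨_, _, Mzw_surj B⟩
  rw [Mzw_mul, norm_Mzw, norm_Mzw, norm_Mzw] at hAB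
  rw [Phi_Mzw c Phi hlin h1 h2, Phi_Mzw c Phi hlin h1 h2, Mzw_mul, norm_Mzw, norm_Mzw, norm_Mzw]
  have habs : ∀ w : ℂ, ‖((c:ℂ) * w)‖ = c * ‖w‖ := by
    intro w
    rw [norm_mul, Complex.norm_real, Real.norm_eq_abs, _root_.abs_of_pos hc]
  rw [habs, habs]
  have hz : z₁ * z₂ + (c:ℂ) * w₁ * (starRingEnd ℂ) ((c:ℂ) * w₂)
      = z₁ * z₂ + (c^2 : ℝ) • (w₁ * (starRingEnd ℂ) w₂) := by
    simp [map_mul, Complex.conj_ofReal, Complex.real_smul]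
    ring
  have hw : z₁ * ((c:ℂ) * w₂) + (c:ℂ) * w₁ * (starRingEnd ℂ) z₂
      = (c:ℂ) * (z₁ * w₂ + w₁ * (starRingEnd ℂ) z₂) := by ring
  rw [hz, hw, habs]
  exact eqcase c hc z₁ w₁ z₂ w₂ hAB
end
end

section
/- Let e, f be orthonormal vectors in ℝ² and X ∈ M₂(ℝ). Then X attains its spectral norm at e (i.e., ‖Xe‖ = ‖X‖) if and only if Xe ⊥ Xf and ‖Xe‖ ≥ ‖Xf‖. -/
open scoped Matrix Matrix.Norms.L2Operator

set_option maxHeartbeats 1000000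

noncomputable section

lemma aux19 (e f : EuclideanSpace ℝ (Fin 2)) (he : ‖e‖ = 1) (hf : ‖f‖ = 1)
    (hef : inner ℝ e f = (0 : ℝ))
    (T : EuclideanSpace ℝ (Fin 2) →L[ℝ] EuclideanSpace ℝ (Fin 2)) :
    ‖T e‖ = ‖T‖ ↔ (inner ℝ (T e) (T f) = (0 : ℝ) ∧ ‖T f‖ ≤ ‖T e‖) := by
  have hfe : inner ℝ f e = (0 : ℝ) := by rw [real_inner_comm]; exact hef
  -- orthonormality of ![e, f]
  have hon : Orthonormal ℝ ![e, f] := by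
    constructor
    · intro i; fin_cases i <;> simpa using (by assumption : _)
    · intro i j hij
      fin_cases i <;> fin_cases j <;> simp_all
  -- span
  have hcard : Fintype.card (Fin 2) = Module.finrank ℝ (EuclideanSpace ℝ (Fin 2)) := by simp
  have hsp : ⊤ ≤ Submodule.span ℝ (Set.range ![e, f]) :=
    (hon.linearIndependent.span_eq_top_of_card_eq_finrank hcard).ge
  have hdecomp : ∀ v : EuclideanSpace ℝ (Fin 2), ∃ a c : ℝ, v = a • e + c • f := by
    intro v
    set b : OrthonormalBasis (Fin 2) ℝ (EuclideanSpace ℝ (Fin 2)) :=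
      OrthonormalBasis.mk hon hsp with hb
    refine ⟨b.repr v 0, b.repr v 1, ?_⟩
    have hsum := b.sum_repr v
    rw [Fin.sum_univ_two] at hsum
    have h0 : b 0 = e := by rw [hb, OrthonormalBasis.coe_mk]; rfl
    have h1 : b 1 = f := by rw [hb, OrthonormalBasis.coe_mk]; rfl
    rw [h0, h1] at hsum
    exact hsum.symm
  set A := ‖T e‖ with hA
  set B := ‖T f‖ with hB
  set C : ℝ := inner ℝ (T e) (T f) with hC
  have hnormsq : ∀ a c : ℝ, ‖(a • e + c • f : EuclideanSpace ℝ (Fin 2))‖ ^ 2 = a ^ 2 + c ^ 2 := by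
    intro a c
    rw [← real_inner_self_eq_norm_sq]
    have hx : (inner ℝ (a • e + c • f) (a • e + c • f) : ℝ) =
        a * a * inner ℝ e e + a * c * inner ℝ e f + c * a * inner ℝ f e + c * c * inner ℝ f f := by
      simp only [inner_add_left, inner_add_right, real_inner_smul_left, real_inner_smul_right]
      ring
    rw [hx, hef, hfe, real_inner_self_eq_norm_sq, real_inner_self_eq_norm_sq, he, hf]
    ring
  have hTsq : ∀ a c : ℝ, ‖T (a • e + c • f)‖ ^ 2 = a ^ 2 * A ^ 2 + 2 * a * c * C + c ^ 2 * B ^ 2 := by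
    intro a c
    rw [← real_inner_self_eq_norm_sq, map_add, map_smul, map_smul]
    have hfe' : (inner ℝ (T f) (T e) : ℝ) = C := by rw [hC, real_inner_comm]
    have hx : (inner ℝ (a • T e + c • T f) (a • T e + c • T f) : ℝ) =
        a * a * inner ℝ (T e) (T e) + a * c * inner ℝ (T e) (T f)
          + c * a * inner ℝ (T f) (T e) + c * c * inner ℝ (T f) (T f) := by
      simp only [inner_add_left, inner_add_right, real_inner_smul_left, real_inner_smul_right]
      ring
    rw [hx, hfe', ← hC, real_inner_self_eq_norm_sq, real_inner_self_eq_norm_sq, ← hA, ← hB]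
    ring
  constructor
  · intro h
    have hBA : B ≤ A := by
      rw [h]; exact T.unit_le_opNorm f hf.le
    refine ⟨?_, hBA⟩
    by_contra hCne
    have hCpos : 0 < |C| := abs_pos.mpr hCne
    set D := A ^ 2 - B ^ 2 with hD
    have hDnn : 0 ≤ D := by
      have : B ^ 2 ≤ A ^ 2 := by
        apply pow_le_pow_left₀ (norm_nonneg _) hBA
      linarith
    set t : ℝ := min (1/2) (|C| / (2 * (D + 1))) with ht
    have htpos : 0 < t := by
      apply lt_min (by norm_num)
      positivity
    have hthalf : t ≤ 1/2 := min_le_left _ _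
    have htD : t * D < |C| := by
      calc t * D ≤ (|C| / (2 * (D + 1))) * D :=
            mul_le_mul_of_nonneg_right (min_le_right _ _) hDnn
        _ < |C| := by
            rw [div_mul_eq_mul_div, div_lt_iff₀ (by positivity)]
            nlinarith [hCpos]
    set a : ℝ := Real.sqrt (1 - t ^ 2) with ha
    have ht1 : t ^ 2 ≤ 1/4 := by nlinarith
    have ha2 : a ^ 2 = 1 - t ^ 2 := Real.sq_sqrt (by nlinarith)
    have hahalf : 1/2 ≤ a := by
      rw [ha]
      have : ((1:ℝ)/2) = Real.sqrt (1/4) := by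
        rw [show (1:ℝ)/4 = (1/2)^2 by norm_num, Real.sqrt_sq (by norm_num)]
      rw [this]
      exact Real.sqrt_le_sqrt (by linarith)
    set s : ℝ := if 0 < C then t else -t with hs
    have hsC : s * C = t * |C| := by
      rcases lt_trichotomy C 0 with hc | hc | hc
      · rw [hs, if_neg (by linarith), abs_of_neg hc]; ring
      · exact absurd hc hCne
      · rw [hs, if_pos hc, abs_of_pos hc]
    have hs2 : s ^ 2 = t ^ 2 := by
      rcases le_or_gt C 0 with hc | hc
      · rw [hs, if_neg (not_lt.mpr hc)]; ring
      · rw [hs, if_pos hc]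
    -- unit vector a • e + s • f
    have hvnorm : ‖(a • e + s • f : EuclideanSpace ℝ (Fin 2))‖ = 1 := by
      have := hnormsq a s
      rw [hs2, ha2] at this
      have h1 : ‖(a • e + s • f : EuclideanSpace ℝ (Fin 2))‖ ^ 2 = 1 := by rw [this]; ring
      nlinarith [norm_nonneg (a • e + s • f : EuclideanSpace ℝ (Fin 2))]
    have hle : ‖T (a • e + s • f)‖ ≤ A := by
      rw [h]
      exact T.unit_le_opNorm _ hvnorm.le
    have hle2 : ‖T (a • e + s • f)‖ ^ 2 ≤ A ^ 2 := by
      apply pow_le_pow_left₀ (norm_nonneg _) hle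
    rw [hTsq] at hle2
    have key : 2 * a * (t * |C|) ≤ t ^ 2 * D := by
      have : a ^ 2 * A ^ 2 + 2 * a * s * C + s ^ 2 * B ^ 2 ≤ A ^ 2 := hle2
      rw [hs2, ha2] at this
      have h2 : 2 * a * (s * C) ≤ t ^ 2 * (A ^ 2 - B ^ 2) := by nlinarith
      rw [hsC] at h2
      exact h2
    -- but 2 * a ≥ 1 and t * D < |C| give contradiction
    have h3 : t * |C| ≤ 2 * a * (t * |C|) := by
      have hp : 0 ≤ (2 * a - 1) * (t * |C|) :=
        mul_nonneg (by linarith) (mul_nonneg htpos.le hCpos.le)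
      nlinarith [hp]
    have h4 : t ^ 2 * D < t * |C| := by
      calc t ^ 2 * D = t * (t * D) := by ring
        _ < t * |C| := by
            exact mul_lt_mul_of_pos_left htD htpos
    linarith
  · rintro ⟨hC0, hBA⟩
    have h1 : A ≤ ‖T‖ := by rw [hA]; exact T.unit_le_opNorm e he.le
    have h2 : ‖T‖ ≤ A := by
      apply T.opNorm_le_bound (norm_nonneg _)
      intro v
      obtain ⟨a, c, rfl⟩ := hdecomp v
      have hB2 : B ^ 2 ≤ A ^ 2 := pow_le_pow_left₀ (norm_nonneg _) hBA 2
      have hsq : ‖T (a • e + c • f)‖ ^ 2 ≤ (A * ‖(a • e + c • f : EuclideanSpace ℝ (Fin 2))‖) ^ 2 := by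
        rw [hTsq, hC0, mul_pow, hnormsq]
        nlinarith [sq_nonneg a, sq_nonneg c]
      exact (pow_le_pow_iff_left₀ (norm_nonneg _) (by positivity) two_ne_zero).mp hsq
    linarith

/-- For orthonormal e, f in ℝ² and X ∈ M₂(ℝ): X attains its norm at e iff Xe ⊥ Xf and
‖Xf‖ ≤ ‖Xe‖. -/
theorem stmt19 (e f : EuclideanSpace ℝ (Fin 2)) (he : ‖e‖ = 1) (hf : ‖f‖ = 1)
    (hef : inner ℝ e f = (0 : ℝ)) (X : Matrix (Fin 2) (Fin 2) ℝ) :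
    ‖Matrix.toEuclideanCLM (𝕜 := ℝ) X e‖ = ‖X‖ ↔
      (inner ℝ (Matrix.toEuclideanCLM (𝕜 := ℝ) X e) (Matrix.toEuclideanCLM (𝕜 := ℝ) X f) = (0 : ℝ) ∧
        ‖Matrix.toEuclideanCLM (𝕜 := ℝ) X f‖ ≤ ‖Matrix.toEuclideanCLM (𝕜 := ℝ) X e‖) := by
  rw [Matrix.cstar_norm_def]
  exact aux19 e f he hf hef _
end
end
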